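/- arXiv:1010.3519 — 5 statements merged into one kernel-verified Lean document; each statement's English description precedes it below -/
import Mathlib

section
/- Stage-2 successive refinement identity: Let ρ ∈ (−1,1), 0 < D_{X1} ≤ 1, σ₁² = 1 − ρ² + ρ²·D_{X1}, and 0 < D_{Y2} ≤ σ₁². Define σ₂² = D_{X1}·((1−ρ²)² + D_{X1}·ρ²·(D_{Y2} + 1 − ρ²)) / σ₁⁴ and S = σ₁²/(D_{X1}·D_{Y2}) (which equals e^{2(R₁+R₂)} with R₁ = (1/2)log(1/D_{X1}) and R₂ = (1/2)log(σ₁²/D_{Y2})). Then σ₂²·D_{Y2}·S² − (1−ρ²)·S = ρ²; that is, the accumulated sum-rate R₁+R₂ equals the Wagner minimum sum-rate at the distortion pair (σ₂², D_{Y2}). -/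
theorem stage2_successive_refinement (ρ DX1 DY2 : ℝ) (hρ : |ρ| < 1)
    (hDX1 : 0 < DX1) (hDX1' : DX1 ≤ 1)
    (hDY2 : 0 < DY2) (hDY2' : DY2 ≤ 1 - ρ^2 + ρ^2 * DX1) :
    let σ1sq := 1 - ρ^2 + ρ^2 * DX1
    let σ2sq := DX1 * ((1 - ρ^2)^2 + DX1 * ρ^2 * (DY2 + 1 - ρ^2)) / σ1sq^2
    let S := σ1sq / (DX1 * DY2)
    σ2sq * DY2 * S^2 - (1 - ρ^2) * S = ρ^2 := by
  intro σ1sq σ2sq S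
  have hρ2 : ρ^2 < 1 := by
    have := abs_lt.mp hρ
    nlinarith [this.1, this.2]
  have hσ1 : 0 < σ1sq := by
    simp only [σ1sq]
    nlinarith [sq_nonneg ρ]
  have h1 : σ1sq ≠ 0 := ne_of_gt hσ1
  simp only [σ2sq, S]
  field_simp
  ring
end

section
/- Stage-3 successive refinement identity: Let ρ ∈ (−1,1), 0 < D_{X1} ≤ 1, σ₁² = 1 − ρ² + ρ²·D_{X1}, 0 < D_{Y2} ≤ σ₁², σ₂² = D_{X1}·((1−ρ²)² + D_{X1}·ρ²·(D_{Y2}+1−ρ²))/σ₁⁴, and 0 < D_{X3} ≤ σ₂². Define σ₃² = D_{Y2}·(ρ²D_{X1}−ρ²+1)·[ (1−ρ²)·(ρ²·D_{X3}·D_{Y2} + (ρ²−1)²) + ρ²·D_{X1}·( D_{Y2}·(ρ²·D_{X3} − ρ² + 1) + (ρ²−1)² ) ] / ( ρ²·D_{X1}·(D_{Y2} − ρ² + 1) + (ρ²−1)² )², and S = σ₁²·σ₂²/(D_{X1}·D_{Y2}·D_{X3}) (which equals e^{2(R₁+R₂+R₃)}). Then D_{X3}·σ₃²·S² − (1−ρ²)·S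 = ρ²; that is, the total sum-rate R₁+R₂+R₃ equals the Wagner minimum sum-rate at distortion pair (D_{X3}, σ₃²). -/
theorem stage3_successive_refinement (ρ DX1 DY2 DX3 : ℝ) (hρ : |ρ| < 1)
    (hDX1 : 0 < DX1) (hDX1' : DX1 ≤ 1)
    (hDY2 : 0 < DY2) (hDY2' : DY2 ≤ 1 - ρ^2 + ρ^2 * DX1)
    (hDX3 : 0 < DX3)
    (hDX3' : DX3 ≤ DX1 * ((1 - ρ^2)^2 + DX1 * ρ^2 * (DY2 + 1 - ρ^2)) / (1 - ρ^2 + ρ^2 * DX1)^2) :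
    let σ1sq := 1 - ρ^2 + ρ^2 * DX1
    let σ2sq := DX1 * ((1 - ρ^2)^2 + DX1 * ρ^2 * (DY2 + 1 - ρ^2)) / σ1sq^2
    let σ3sq := DY2 * (ρ^2 * DX1 - ρ^2 + 1) *
        ((1 - ρ^2) * (ρ^2 * DX3 * DY2 + (ρ^2 - 1)^2) +
          ρ^2 * DX1 * (DY2 * (ρ^2 * DX3 - ρ^2 + 1) + (ρ^2 - 1)^2)) /
        (ρ^2 * DX1 * (DY2 - ρ^2 + 1) + (ρ^2 - 1)^2)^2
    let S := σ1sq * σ2sq / (DX1 * DY2 * DX3)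
    DX3 * σ3sq * S^2 - (1 - ρ^2) * S = ρ^2 := by
  intro σ1sq σ2sq σ3sq S
  have hρ2 : ρ^2 < 1 := by
    have := abs_nonneg ρ
    nlinarith [sq_abs ρ]
  have h1 : σ1sq > 0 := by
    simp only [σ1sq]; nlinarith [sq_nonneg ρ]
  have h2 : ρ^2 * DX1 * (DY2 - ρ^2 + 1) + (ρ^2 - 1)^2 > 0 := by
    nlinarith [sq_nonneg ρ, mul_pos (mul_pos (mul_pos hDX1 hDY2) hDX3) h1]
  simp only [σ3sq, S, σ2sq, σ1sq] at *
  have hd1 : (1 - ρ^2 + ρ^2 * DX1) ≠ 0 := ne_of_gt h1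
  have hd2 : (ρ^2 * DX1 * (DY2 - ρ^2 + 1) + (ρ^2 - 1)^2) ≠ 0 := ne_of_gt h2
  field_simp
  ring
end

section
/- Distortion improvement at stage 2: Let ρ ∈ (−1,1), 0 < D_{X1} ≤ 1, σ₁² = 1 − ρ² + ρ²·D_{X1}, and 0 < D_{Y2} ≤ σ₁². Then σ₂² := D_{X1}·((1−ρ²)² + D_{X1}·ρ²·(D_{Y2} + 1 − ρ²)) / σ₁⁴ satisfies 0 < σ₂² ≤ D_{X1}, with equality σ₂² = D_{X1} if and only if ρ = 0 or D_{Y2} = σ₁². -/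
theorem stage2_distortion_improvement (ρ DX1 DY2 : ℝ) (hρ : |ρ| < 1)
    (hDX1 : 0 < DX1) (hDX1' : DX1 ≤ 1)
    (hDY2 : 0 < DY2) (hDY2' : DY2 ≤ 1 - ρ^2 + ρ^2 * DX1) :
    let σ1sq := 1 - ρ^2 + ρ^2 * DX1
    let σ2sq := DX1 * ((1 - ρ^2)^2 + DX1 * ρ^2 * (DY2 + 1 - ρ^2)) / σ1sq^2
    0 < σ2sq ∧ σ2sq ≤ DX1 ∧ (σ2sq = DX1 ↔ ρ = 0 ∨ DY2 = σ1sq) := by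
  intro σ1sq σ2sq
  have hρ2 : ρ^2 < 1 := by
    have := abs_nonneg ρ
    nlinarith [sq_abs ρ]
  have hσ1 : 0 < σ1sq := by
    have : 0 ≤ ρ^2 * DX1 := by positivity
    simp only [σ1sq]; nlinarith
  have hσ1sq : 0 < σ1sq^2 := by positivity
  have hnum : 0 < (1 - ρ^2)^2 + DX1 * ρ^2 * (DY2 + 1 - ρ^2) := by
    have h1 : 0 < DY2 + 1 - ρ^2 := by nlinarith
    nlinarith [sq_nonneg ρ, sq_nonneg (1 - ρ^2)]
  refine ⟨by positivity, ?_, ?_⟩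
  · rw [div_le_iff₀ hσ1sq]
    simp only [σ1sq]
    nlinarith [sq_nonneg ρ, mul_nonneg (mul_nonneg hDX1.le (sq_nonneg ρ)) (sub_nonneg.mpr hDY2')]
  · rw [div_eq_iff hσ1sq.ne']
    constructor
    · intro h
      by_cases hr : ρ = 0
      · exact Or.inl hr
      · right
        have hr2 : 0 < ρ^2 := by positivity
        simp only [σ1sq] at h ⊢
        have hp : 0 < DX1 * DX1 * ρ^2 := by positivity
        refine le_antisymm hDY2' ?_
        nlinarith [hp, h]
    · intro h
      rcases h with h | h
      · simp only [σ1sq, h]; ring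
      · simp only [σ1sq] at h ⊢; rw [h]; ring
end

section
/- Distortion improvement at stage 3: Let ρ ∈ (−1,1), 0 < D_{X1} ≤ 1, σ₁² = 1 − ρ² + ρ²·D_{X1}, 0 < D_{Y2} ≤ σ₁², σ₂² = D_{X1}·((1−ρ²)² + D_{X1}·ρ²·(D_{Y2}+1−ρ²))/σ₁⁴, and 0 < D_{X3} ≤ σ₂². Then σ₃², defined by σ₃² = D_{Y2}·(ρ²D_{X1}−ρ²+1)·[ (1−ρ²)·(ρ²D_{X3}D_{Y2} + (ρ²−1)²) + ρ²D_{X1}·( D_{Y2}·(ρ²D_{X3} − ρ² + 1) + (ρ²−1)² ) ] / ( ρ²D_{X1}·(D_{Y2} − ρ² + 1) + (ρ²−1)² )², satisfies 0 < σ₃² ≤ D_{Y2}. -/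
theorem stage3_distortion_improvement (ρ DX1 DY2 DX3 : ℝ) (hρ : |ρ| < 1)
    (hDX1 : 0 < DX1) (hDX1' : DX1 ≤ 1)
    (hDY2 : 0 < DY2) (hDY2' : DY2 ≤ 1 - ρ^2 + ρ^2 * DX1)
    (hDX3 : 0 < DX3)
    (hDX3' : DX3 ≤ DX1 * ((1 - ρ^2)^2 + DX1 * ρ^2 * (DY2 + 1 - ρ^2)) / (1 - ρ^2 + ρ^2 * DX1)^2) :
    let σ3sq := DY2 * (ρ^2 * DX1 - ρ^2 + 1) *
        ((1 - ρ^2) * (ρ^2 * DX3 * DY2 + (ρ^2 - 1)^2) +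
          ρ^2 * DX1 * (DY2 * (ρ^2 * DX3 - ρ^2 + 1) + (ρ^2 - 1)^2)) /
        (ρ^2 * DX1 * (DY2 - ρ^2 + 1) + (ρ^2 - 1)^2)^2
    0 < σ3sq ∧ σ3sq ≤ DY2 := by
  have hs : 0 < 1 - ρ^2 := by
    have := (sq_lt_one_iff_abs_lt_one _).mpr hρ
    nlinarith [sq_nonneg ρ]
  have ha : 0 ≤ ρ^2 * DX1 := by positivity
  have hσ1 : 0 < 1 - ρ^2 + ρ^2 * DX1 := by linarith
  have hD : 0 < ρ^2 * DX1 * (DY2 - ρ^2 + 1) + (ρ^2 - 1)^2 := by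
    have h1 : 0 ≤ ρ^2 * DX1 * (DY2 - ρ^2 + 1) := by
      apply mul_nonneg ha; nlinarith
    nlinarith
  have key : DX3 * (1 - ρ^2 + ρ^2 * DX1)^2 ≤
      DX1 * ((1 - ρ^2)^2 + DX1 * ρ^2 * (DY2 + 1 - ρ^2)) :=
    (le_div_iff₀ (by positivity)).mp hDX3'
  intro σ3sq
  constructor
  · have hnum : 0 < DY2 * (ρ^2 * DX1 - ρ^2 + 1) *
        ((1 - ρ^2) * (ρ^2 * DX3 * DY2 + (ρ^2 - 1)^2) +
          ρ^2 * DX1 * (DY2 * (ρ^2 * DX3 - ρ^2 + 1) + (ρ^2 - 1)^2)) := by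
      apply mul_pos (mul_pos hDY2 (by linarith))
      have h1 : 0 < (1 - ρ^2) * (ρ^2 * DX3 * DY2 + (ρ^2 - 1)^2) := by
        apply mul_pos hs
        nlinarith [mul_nonneg (mul_nonneg (sq_nonneg ρ) hDX3.le) hDY2.le]
      have h2 : 0 ≤ ρ^2 * DX1 * (DY2 * (ρ^2 * DX3 - ρ^2 + 1) + (ρ^2 - 1)^2) := by
        apply mul_nonneg ha
        nlinarith [mul_nonneg (mul_nonneg (sq_nonneg ρ) hDX3.le) hDY2.le]
      linarith
    exact div_pos hnum (by positivity)
  · rw [div_le_iff₀ (by positivity)]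
    nlinarith [mul_le_mul_of_nonneg_left key
      (show (0:ℝ) ≤ ρ^2 * DY2^2 by positivity)]
end

section
/- Feasibility of the symmetric distortion point: For every ρ ∈ (−1,1) and every D ∈ (0,1), there exists D_{X1} ∈ (0,1] such that, with σ₁² = 1 − ρ² + ρ²·D_{X1}, one has D ≤ σ₁² and σ₂²(D_{X1}, D) = D, where σ₂²(D_{X1}, D_{Y2}) = D_{X1}·((1−ρ²)² + D_{X1}·ρ²·(D_{Y2} + 1 − ρ²))/σ₁⁴. That is, the symmetric distortion pair (D_{X2}, D_{Y2}) = (D, D) is always achievable at the second stage of DiSAC2, regardless of ρ. -/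
lemma aux_ivt (ρ D c : ℝ) (hρ2 : ρ ^ 2 < 1) (hD : 0 < D) (hD' : D < 1)
    (hc0 : 0 ≤ c) (hc1 : c ≤ 1)
    (hgc : c * ((1 - ρ^2)^2 + c * ρ^2 * (D + 1 - ρ^2)) / (1 - ρ^2 + ρ^2 * c)^2 ≤ D)
    (hDc : D ≤ 1 - ρ^2 + ρ^2 * c) :
    ∃ DX1 : ℝ, 0 < DX1 ∧ DX1 ≤ 1 ∧
      D ≤ 1 - ρ^2 + ρ^2 * DX1 ∧
      DX1 * ((1 - ρ^2)^2 + DX1 * ρ^2 * (D + 1 - ρ^2)) / (1 - ρ^2 + ρ^2 * DX1)^2 = D := by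
  have hρ0 : 0 ≤ ρ ^ 2 := sq_nonneg ρ
  set g : ℝ → ℝ :=
    fun t => t * ((1 - ρ^2)^2 + t * ρ^2 * (D + 1 - ρ^2)) / (1 - ρ^2 + ρ^2 * t)^2 with hg
  have hdenpos : ∀ t ∈ Set.Icc c 1, 0 < 1 - ρ^2 + ρ^2 * t := by
    intro t ht
    have h1 : 0 ≤ ρ^2 * t := mul_nonneg hρ0 (le_trans hc0 ht.1)
    linarith
  have hcont : ContinuousOn g (Set.Icc c 1) := by
    apply ContinuousOn.div
    · fun_prop
    · fun_prop
    · intro t ht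
      exact pow_ne_zero _ (ne_of_gt (hdenpos t ht))
  have hg1 : D ≤ g 1 := by
    have hden1 : (1 - ρ^2 + ρ^2 * 1)^2 = 1 := by ring
    show D ≤ 1 * ((1 - ρ^2)^2 + 1 * ρ^2 * (D + 1 - ρ^2)) / (1 - ρ^2 + ρ^2 * 1)^2
    rw [hden1]
    nlinarith [sq_nonneg ρ]
  have hsub := intermediate_value_Icc hc1 hcont
  have hDmem : D ∈ Set.Icc (g c) (g 1) := ⟨hgc, hg1⟩
  obtain ⟨t, htmem, hgt⟩ := hsub hDmem
  have ht0 : 0 < t := by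
    rcases lt_or_eq_of_le (le_trans hc0 htmem.1) with h | h
    · exact h
    · exfalso
      have : g t = 0 := by rw [hg]; simp [← h]
      rw [hgt] at this; linarith
  refine ⟨t, ht0, htmem.2, ?_, hgt⟩
  have : ρ^2 * c ≤ ρ^2 * t := mul_le_mul_of_nonneg_left htmem.1 hρ0
  linarith

theorem symmetric_point_feasible (ρ D : ℝ) (hρ : |ρ| < 1) (hD : 0 < D) (hD' : D < 1) :
    ∃ DX1 : ℝ, 0 < DX1 ∧ DX1 ≤ 1 ∧
      D ≤ 1 - ρ^2 + ρ^2 * DX1 ∧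
      DX1 * ((1 - ρ^2)^2 + DX1 * ρ^2 * (D + 1 - ρ^2)) / (1 - ρ^2 + ρ^2 * DX1)^2 = D := by
  have hρ2 : ρ ^ 2 < 1 := by
    have h := abs_lt.mp hρ
    nlinarith [h.1, h.2]
  by_cases hcase : D ≤ 1 - ρ^2
  · -- use c = 0
    apply aux_ivt ρ D 0 hρ2 hD hD' le_rfl (by norm_num)
    · rw [zero_mul, zero_div]; exact hD.le
    · rw [mul_zero, add_zero]; exact hcase
  · -- use c = (D - (1 - ρ^2)) / ρ^2; here ρ^2 > 0
    push_neg at hcase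
    have ha : 0 < ρ ^ 2 := by nlinarith
    set c : ℝ := (D - (1 - ρ^2)) / ρ^2 with hc
    have hden : 1 - ρ^2 + ρ^2 * c = D := by rw [hc, mul_div_assoc', mul_div_cancel_left₀ _ (ne_of_gt ha)]; ring
    have hc0 : 0 ≤ c := by
      apply div_nonneg _ (le_of_lt ha); linarith
    have hcD : c ≤ D := by
      rw [hc, div_le_iff₀ ha]; nlinarith
    have hc1 : c ≤ 1 := le_trans hcD (le_of_lt hD')
    apply aux_ivt ρ D c hρ2 hD hD' hc0 hc1
    · -- g c = c ≤ D
      have hkey : c * ((1 - ρ^2)^2 + c * ρ^2 * (D + 1 - ρ^2)) = c * D^2 := by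
        have h2 : ρ^2 * c = D - (1 - ρ^2) := by linarith [hden]
        linear_combination c * (D + 1 - ρ^2) * h2
      rw [hden, hkey]
      have hD2 : (0:ℝ) < D^2 := by positivity
      rw [mul_div_assoc, div_self (ne_of_gt hD2), mul_one]
      exact hcD
    · rw [hden]
end
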